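/- arXiv:1805.06706 — 2 statements merged into one kernel-verified Lean document; each statement's English description precedes it below -/
import Mathlib

section
/- For all integers 0 < k < n ≤ m and every positive integer s coprime to m, there exists a matrix X ∈ 𝔽_{q^m}^{k×(n−k)} which is a Hankel matrix (i.e., X_{i,j} depends only on i+j: there is a vector a such that X_{i,j} = a_{i+j−2}) such that the code C_X is a generalized Gabidulin code of parameter s. -/
open Finset

/-- The explicit trace map of `𝔽_{q^m}/𝔽_q`: `Tr(x) = ∑_{i=0}^{m-1} x^{q^i}`. -/
def fieldTrace (q m : ℕ) {L : Type*} [Field L] (x : L) : L :=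
  ∑ i ∈ Finset.range m, x ^ q ^ i

/-- The `q`-rank of a vector with entries in `L`: the `K`-dimension of the
`K`-span of its entries. -/
noncomputable def rkq (K : Type*) {L : Type*} [Field K] [Field L] [Algebra K L]
    {ι : Type*} (v : ι → L) : ℕ :=
  Module.finrank K (Submodule.span K (Set.range v))

/-- The code `C_X`: the `L`-row space of the matrix `(I_k | X)`. -/
noncomputable def CX {L : Type*} [Field L] {k r : ℕ} (X : Matrix (Fin k) (Fin r) L) :
    Submodule L (Fin (k + r) → L) :=
  Submodule.span L (Set.range fun i : Fin k =>
    Matrix.reindex (Equiv.refl (Fin k)) finSumFinEquiv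
      (Matrix.fromCols (1 : Matrix (Fin k) (Fin k) L) X) i)

/-- The minimum rank distance of a linear code `C`. -/
noncomputable def minRankDist (K : Type*) {L : Type*} [Field K] [Field L] [Algebra K L]
    {n : ℕ} (C : Submodule L (Fin n → L)) : ℕ :=
  sInf {d : ℕ | ∃ c ∈ C, c ≠ 0 ∧ rkq K c = d}

/-- `C` is a generalized Gabidulin code of parameter `s` and dimension `k`:
it is the `L`-row space of an `s`-Moore matrix `M_{s,k}(g)` for some `g` of full `q`-rank. -/
def IsGabidulin (K : Type*) {L : Type*} [Field K] [Field L] [Algebra K L]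
    (q s k : ℕ) {n : ℕ} (C : Submodule L (Fin n → L)) : Prop :=
  ∃ g : Fin n → L, rkq K g = n ∧
    C = Submodule.span L (Set.range fun i : Fin k => fun j => g j ^ q ^ (s * (i : ℕ)))

/-- The map `Φ_s` applying `x ↦ x^{q^s} - x` entrywise to a matrix. -/
def PhiS (q s : ℕ) {L : Type*} [Field L] {k r : ℕ} (X : Matrix (Fin k) (Fin r) L) :
    Matrix (Fin k) (Fin r) L :=
  Matrix.of fun i j => X i j ^ q ^ s - X i j

/-- A matrix is superregular if all of its minors are nonzero. -/
def Superregular {L : Type*} [Field L] {a b : ℕ} (M : Matrix (Fin a) (Fin b) L) : Prop :=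
  ∀ (t : ℕ) (f : Fin t → Fin a) (g : Fin t → Fin b),
    StrictMono f → StrictMono g → (M.submatrix f g).det ≠ 0

section AuxGabProof
set_option linter.unusedSectionVars false
variable {K L : Type*} [Field K] [Field L] [Algebra K L] [Fintype K] [Fintype L]


variable {K L : Type*} [Field K] [Field L] [Algebra K L] [Fintype K] [Fintype L]

lemma auxGab_pow_comp {M : Type*} [Monoid M] (x : M) (Q a b : ℕ) :
    (x ^ Q ^ a) ^ Q ^ b = x ^ Q ^ (a + b) := by
  rw [← pow_mul, ← pow_add]

lemma auxGab_iter_fixed {M : Type*} [Monoid M] (x : M) (Q d : ℕ) (h : x ^ Q ^ d = x) :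
    ∀ t, x ^ Q ^ (d * t) = x := by
  intro t
  induction t with
  | zero => simp
  | succ t ih =>
      have : x ^ Q ^ (d * t + d) = x := by
        rw [← auxGab_pow_comp x Q (d * t) d, ih, h]
      simpa [mul_add, mul_comm] using this

/-- Construction of the iterated `q^s`-Frobenius homomorphisms. -/
lemma auxGab_exists_frob (q s : ℕ) (hq : Fintype.card K = q) :
    ∃ σ : ℕ → (L →+* L), ∀ t x, σ t x = x ^ q ^ (s * t) := by
  obtain ⟨p, hchar⟩ := CharP.exists K
  haveI : CharP K p := hchar
  obtain ⟨e, hp, hqe⟩ := FiniteField.card K p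
  haveI : CharP L p := charP_of_injective_algebraMap (algebraMap K L).injective p
  haveI : Fact p.Prime := ⟨hp⟩
  haveI : ExpChar L p := ExpChar.prime hp
  refine ⟨fun t => iterateFrobenius L p ((e : ℕ) * (s * t)), fun t x => ?_⟩
  rw [iterateFrobenius_def, pow_mul, ← hqe, hq]

lemma auxGab_pow_card_eq (q m : ℕ) (hq : Fintype.card K = q)
    (hm : Module.finrank K L = m) (x : L) : x ^ q ^ m = x := by
  have : Fintype.card L = q ^ m := by
    rw [Module.card_eq_pow_finrank (K := K) (V := L), hq, hm]
  rw [← this, FiniteField.pow_card]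

/-- Existence of a multiplicative generator with the needed properties. -/
lemma auxGab_exists_rho (q m : ℕ) (hq : Fintype.card K = q)
    (hm : Module.finrank K L = m) (hm0 : 0 < m) :
    ∃ ρ : L, ρ ≠ 0 ∧ (∀ u : ℕ, ρ ^ q ^ u = ρ → m ∣ u) ∧
      LinearIndependent K (fun i : Fin m => ρ ^ (i : ℕ)) := by
  have hq1 : 1 < q := hq ▸ Fintype.one_lt_card
  haveI : Fintype Lˣ := Fintype.ofFinite _
  obtain ⟨ξ, hξ⟩ := IsCyclic.exists_monoid_generator (α := Lˣ)
  have hcardL : Fintype.card L = q ^ m := by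
    rw [Module.card_eq_pow_finrank (K := K) (V := L), hq, hm]
  have hordu : orderOf ξ = q ^ m - 1 := by
    have h1 : orderOf ξ = Nat.card Lˣ := by
      apply orderOf_eq_card_of_forall_mem_zpowers
      intro y
      obtain ⟨n, hn⟩ := hξ y
      exact ⟨(n : ℤ), by simpa [zpow_natCast] using hn⟩
    rw [h1, Nat.card_units, Nat.card_eq_fintype_card, hcardL]
  refine ⟨(ξ : L), Units.ne_zero ξ, ?_, ?_⟩
  · intro u hu
    have hsplit : (ξ : L) ^ q ^ (m * (u / m) + u % m) = (ξ : L) := by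
      rw [Nat.div_add_mod]; exact hu
    have h2 : ((ξ : L) ^ q ^ (m * (u / m))) ^ q ^ (u % m) = (ξ : L) := by
      rw [auxGab_pow_comp]; exact hsplit
    rw [auxGab_iter_fixed (ξ : L) q m (auxGab_pow_card_eq q m hq hm (ξ : L)) (u / m)] at h2
    -- now h2 : ξ ^ q ^ (u % m) = ξ
    by_contra hdvd
    have hmod : u % m ≠ 0 := fun h0 => hdvd (Nat.dvd_of_mod_eq_zero h0)
    have hlt : u % m < m := Nat.mod_lt u hm0
    have hqN : 1 < q ^ (u % m) := by
      calc 1 < q := hq1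
        _ ≤ q ^ (u % m) := Nat.le_self_pow hmod q
    -- lift to units
    have hu2 : ξ ^ q ^ (u % m) = ξ := by
      apply Units.ext
      simpa [Units.val_pow_eq_pow_val] using h2
    have hpow1 : ξ ^ (q ^ (u % m) - 1) = 1 := by
      have : ξ ^ (q ^ (u % m) - 1) * ξ = 1 * ξ := by
        rw [one_mul, ← pow_succ]
        have he : q ^ (u % m) - 1 + 1 = q ^ (u % m) := by omega
        rw [he, hu2]
      exact mul_right_cancel this
    have hdvd_ord : orderOf ξ ∣ q ^ (u % m) - 1 := orderOf_dvd_of_pow_eq_one hpow1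
    have hle := Nat.le_of_dvd (by omega) hdvd_ord
    rw [hordu] at hle
    have hqm : q ^ (u % m) < q ^ m := Nat.pow_lt_pow_right hq1 hlt
    have hq1m : 1 ≤ q ^ m := Nat.one_le_pow _ _ (by omega)
    omega
  · have hint : IsIntegral K ((ξ : L)) := IsIntegral.of_finite K _
    have htop : IntermediateField.adjoin K {((ξ : L))} = ⊤ := by
      rw [eq_top_iff]
      intro y _
      by_cases hy : y = 0
      · exact hy ▸ zero_mem _
      · obtain ⟨n, hn⟩ := hξ (Units.mk0 y hy)
        have hyn : y = (ξ : L) ^ n := by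
          have := congrArg (Units.val) hn
          simpa [Units.val_pow_eq_pow_val] using this.symm
        rw [hyn]
        exact pow_mem (IntermediateField.mem_adjoin_simple_self K _) n
    have hdeg : (minpoly K ((ξ : L))).natDegree = m := by
      rw [← IntermediateField.adjoin.finrank hint, htop, ← hm]
      exact (IntermediateField.topEquiv (F := K) (E := L)).toLinearEquiv.finrank_eq
    have := linearIndependent_pow (K := K) ((ξ : L))
    rw [hdeg] at this
    exact this


set_option linter.unusedSectionVars false

variable {K L : Type*} [Field K] [Field L] [Algebra K L] [Fintype K] [Fintype L]

lemma auxGab_pow_comp' {M : Type*} [Monoid M] (x : M) (Q a b : ℕ) :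
    (x ^ Q ^ a) ^ Q ^ b = x ^ Q ^ (a + b) := by
  rw [← pow_mul, ← pow_add]

lemma auxGab_iter_fixed' {M : Type*} [Monoid M] (x : M) (Q d : ℕ) (h : x ^ Q ^ d = x) :
    ∀ t, x ^ Q ^ (d * t) = x := by
  intro t
  induction t with
  | zero => simp
  | succ t ih =>
      have h2 : x ^ Q ^ (d * t + d) = x := by
        rw [← auxGab_pow_comp' x Q (d * t) d, ih, h]
      simpa [mul_add, mul_comm] using h2

/-- `σ1` fixes the image of `K`. -/
lemma auxGab_fix_algebraMap (q s : ℕ) (hq : Fintype.card K = q) (c : K) :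
    (algebraMap K L c) ^ q ^ s = algebraMap K L c := by
  rw [← map_pow]
  congr 1
  have h1 : c ^ q ^ 1 = c := by
    simpa using (hq ▸ FiniteField.pow_card c)
  simpa using auxGab_iter_fixed' c q 1 h1 s

lemma auxGab_exists_theta (q m s N : ℕ) (hq : Fintype.card K = q)
    (hm : Module.finrank K L = m) (hm1 : 1 < m) (hNm : N + 1 ≤ m)
    (hsm : Nat.Coprime s m) (σ1 : L →+* L) (hσ1 : ∀ x, σ1 x = x ^ q ^ s)
    (ρ : L) (hρ : ρ ≠ 0) :
    ∃ θ : L, θ ≠ 0 ∧ ∀ t < N, ∃ x : L, σ1 x - x = ρ ^ t * θ := by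
  classical
  have hq1 : 1 < q := hq ▸ Fintype.one_lt_card
  -- the K-linear map D = σ1 - id
  let σlin : L →ₗ[K] L :=
    { toFun := σ1
      map_add' := fun x y => map_add σ1 x y
      map_smul' := by
        intro c x
        simp only [RingHom.id_apply, Algebra.smul_def, map_mul]
        rw [hσ1 (algebraMap K L c), auxGab_fix_algebraMap q s hq c] }
  let D : L →ₗ[K] L := σlin - LinearMap.id
  -- kernel elements satisfy y^q = y
  have hkerq : ∀ y ∈ LinearMap.ker D, y ^ q = y := by
    intro y hy
    have hyy : σ1 y - y = 0 := hy
    have hys : y ^ q ^ s = y := by rw [← hσ1 y]; exact sub_eq_zero.mp hyy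
    obtain ⟨u, -, hu⟩ := Nat.exists_mul_mod_eq_one_of_coprime hsm hm1
    have hsu : y ^ q ^ (s * u) = y := auxGab_iter_fixed' y q s hys u
    have hqm : ∀ z : L, z ^ q ^ m = z := by
      intro z
      have hcard : Fintype.card L = q ^ m := by
        rw [Module.card_eq_pow_finrank (K := K) (V := L), hq, hm]
      rw [← hcard, FiniteField.pow_card]
    have hmw : y ^ q ^ (m * (s * u / m) + 1) = y := by
      have := Nat.div_add_mod (s * u) m
      rw [hu] at this
      rw [this]; exact hsu
    calc y ^ q = (y ^ q ^ (m * (s * u / m))) ^ q ^ 1 := by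
          rw [auxGab_iter_fixed' y q m (hqm y) (s * u / m)]; ring_nf
      _ = y ^ q ^ (m * (s * u / m) + 1) := auxGab_pow_comp' y q _ 1
      _ = y := hmw
  -- the kernel has dimension at most 1
  have hker_fr : Module.finrank K (LinearMap.ker D) ≤ 1 := by
    have hcard : Fintype.card (LinearMap.ker D) ≤ q := by
      set f : Polynomial L := Polynomial.X ^ q - Polynomial.X with hf
      have hfdeg : f.natDegree = q := by
        rw [hf]
        rw [Polynomial.natDegree_sub_eq_left_of_natDegree_lt] <;>
          simp [Polynomial.natDegree_X_pow] <;> omega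
      have hf0 : f ≠ 0 := by
        intro h0
        rw [h0] at hfdeg
        simp at hfdeg; omega
      have hsub : ((LinearMap.ker D : Set L).toFinset) ⊆ f.roots.toFinset := by
        intro y hy
        rw [Set.mem_toFinset] at hy
        rw [Multiset.mem_toFinset, Polynomial.mem_roots hf0]
        simp only [Polynomial.IsRoot, hf, Polynomial.eval_sub, Polynomial.eval_pow,
          Polynomial.eval_X, sub_eq_zero]
        exact hkerq y hy
      have h1 : Fintype.card (LinearMap.ker D) = ((LinearMap.ker D : Set L).toFinset).card := by
        rw [Set.toFinset_card]; rfl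
      calc Fintype.card (LinearMap.ker D) = _ := h1
        _ ≤ f.roots.toFinset.card := Finset.card_le_card hsub
        _ ≤ Multiset.card f.roots := Multiset.toFinset_card_le _
        _ ≤ f.natDegree := Polynomial.card_roots' f
        _ = q := hfdeg
    have hcard2 : Fintype.card (LinearMap.ker D) = q ^ Module.finrank K (LinearMap.ker D) := by
      rw [Module.card_eq_pow_finrank (K := K), hq]
    rw [hcard2] at hcard
    have h2 : q ^ Module.finrank K (LinearMap.ker D) ≤ q ^ 1 := by simpa using hcard
    have := (Nat.pow_le_pow_iff_right hq1).mp h2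
    omega
  -- the range has dimension at least m - 1
  have hrange_fr : m ≤ Module.finrank K (LinearMap.range D) + 1 := by
    have := LinearMap.finrank_range_add_finrank_ker D
    rw [hm] at this
    omega
  -- the subspaces U t
  let mulρ : ℕ → (L ≃ₗ[K] L) := fun t =>
    LinearEquiv.ofBijective (LinearMap.mulLeft K (ρ ^ t))
      ⟨fun a b hab => by
        simpa using mul_left_cancel₀ (pow_ne_zero t hρ) hab,
       fun z => ⟨(ρ ^ t)⁻¹ * z, by
        simp [LinearMap.mulLeft_apply, ← mul_assoc, mul_inv_cancel₀ (pow_ne_zero t hρ)]⟩⟩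
  let U : ℕ → Submodule K L := fun t => (LinearMap.range D).comap (mulρ t).toLinearMap
  have hU_fr : ∀ t, m ≤ Module.finrank K (U t) + 1 := by
    intro t
    have : U t = (LinearMap.range D).map (mulρ t).symm.toLinearMap := by
      exact Submodule.comap_equiv_eq_map_symm (mulρ t) (LinearMap.range D)
    rw [this, LinearEquiv.finrank_map_eq]
    exact hrange_fr
  -- intersection bound
  let W : ℕ → Submodule K L := fun j => ⨅ t ∈ Finset.range j, U t
  have hinter : ∀ j : ℕ, m ≤ Module.finrank K ↥(W j) + j := by
    intro j
    induction j with
    | zero =>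
        have hW0 : W 0 = ⊤ := by
          simp [W]
        rw [hW0, finrank_top, hm]; omega
    | succ j ih =>
        have hsplit : W (j+1) = U j ⊓ W j := by
          simp only [W, Finset.range_add_one, Finset.iInf_insert]
        rw [hsplit]
        have hkey := Submodule.finrank_sup_add_finrank_inf_eq (U j) (W j)
        have hsup := Submodule.finrank_le (U j ⊔ W j)
        rw [hm] at hsup
        have := hU_fr j
        omega
  -- choose θ
  have hVne : W N ≠ ⊥ := by
    intro hbot
    have := hinter N
    rw [hbot, finrank_bot] at this
    omega
  obtain ⟨θ, hθV, hθ0⟩ := Submodule.exists_mem_ne_zero_of_ne_bot hVne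
  refine ⟨θ, hθ0, ?_⟩
  intro t ht
  have hθU : θ ∈ U t := by
    have h1 := (Submodule.mem_iInf (fun t : ℕ => ⨅ (_ : t ∈ Finset.range N), U t)).mp hθV t
    exact (Submodule.mem_iInf _).mp h1 (Finset.mem_range.mpr ht)
  obtain ⟨x, hx⟩ := hθU
  exact ⟨x, by simpa [D, σlin, LinearMap.mulLeft_apply] using hx.trans (rfl : _ = ρ ^ t * θ)⟩

end AuxGabProof

/-- for all `0 < k < n ≤ m` (here `n = k + r`) and every `s` coprime to `m`,
there exists a Hankel matrix `X` (the entry `X i j` depends only on `i + j`) such that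
`C_X` is a generalized Gabidulin code of parameter `s`. -/
theorem stmt17 {K L : Type*} [Field K] [Field L] [Algebra K L] [Fintype K] [Fintype L]
    (q m k r s : ℕ) (hq : Fintype.card K = q) (hm : Module.finrank K L = m)
    (hk : 0 < k) (hr : 0 < r) (hnm : k + r ≤ m) (hs : 0 < s) (hsm : Nat.Coprime s m) :
    ∃ X : Matrix (Fin k) (Fin r) L,
      (∀ (i i' : Fin k) (j j' : Fin r),
        (i : ℕ) + (j : ℕ) = (i' : ℕ) + (j' : ℕ) → X i j = X i' j') ∧
      IsGabidulin K q s k (CX X) := by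
  classical
  have hm1 : 1 < m := by omega
  have hkm : k ≤ m - 1 := by omega
  obtain ⟨σ, hσ⟩ := auxGab_exists_frob (K := K) (L := L) q s hq
  obtain ⟨ρ, hρ0, hρfix, hρli⟩ := auxGab_exists_rho (K := K) (L := L) q m hq hm (by omega)
  obtain ⟨θ, hθ0, hθa⟩ := auxGab_exists_theta q m s (k + r - 1) hq hm hm1 (by omega) hsm
    (σ 1) (fun x => by simpa using hσ 1 x) ρ hρ0
  -- the sequence a
  let a : ℕ → L := fun t => if h : t < k + r - 1 then Classical.choose (hθa t h) else 0
  have ha : ∀ t (h : t < k + r - 1), σ 1 (a t) = a t + ρ ^ t * θ := by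
    intro t h
    have hspec := Classical.choose_spec (hθa t h)
    have : a t = Classical.choose (hθa t h) := dif_pos h
    rw [this]
    linear_combination hspec
  -- basic σ facts
  have hσcomp : ∀ (t u : ℕ) (x : L), σ u (σ t x) = σ (t + u) x := by
    intro t u x
    rw [hσ, hσ, hσ, auxGab_pow_comp x q (s * t) (s * u), ← mul_add]
  have hσ0 : ∀ x : L, σ 0 x = x := by intro x; rw [hσ]; simp
  have hσsucc : ∀ (t : ℕ) (x : L), σ (t + 1) x = σ 1 (σ t x) := by
    intro t x; rw [hσcomp]
  have hσalg : ∀ (t : ℕ) (cc : K), σ t (algebraMap K L cc) = algebraMap K L cc := by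
    intro t cc; rw [hσ]; exact auxGab_fix_algebraMap q (s * t) hq cc
  -- the conjugates of ρ
  let c : ℕ → L := fun t => σ t ρ
  have hcsucc : ∀ t, c (t + 1) = σ 1 (c t) := fun t => hσsucc t ρ
  have hc0 : c 0 = ρ := hσ0 ρ
  have hcshift : ∀ t u, c (t + u) = σ t (c u) := by
    intro t u
    show σ (t + u) ρ = σ t (σ u ρ)
    rw [hσcomp, Nat.add_comm]
  have hcm : σ m ρ = ρ := by
    rw [hσ]
    have := auxGab_iter_fixed ρ q m (auxGab_pow_card_eq q m hq hm ρ) s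
    rwa [mul_comm] at this
  have hcper : ∀ t, c (t + m) = c t := by
    intro t
    rw [hcshift t m]
    show (σ t) ((σ m) ρ) = (σ t) ρ
    rw [hcm]
  have hcne : ∀ u, 1 ≤ u → u ≤ m - 1 → ∀ j, c (j + u) ≠ c j := by
    intro u h1 h2 j hne
    rw [hcshift j u] at hne
    have hinj : Function.Injective (σ j) := (σ j).injective
    have hcu : c u = ρ := hinj (by rw [hne])
    have : ρ ^ q ^ (s * u) = ρ := by rw [← hσ u ρ]; exact hcu
    have hdvd : m ∣ s * u := hρfix _ this
    have : m ∣ u := (Nat.Coprime.symm hsm).dvd_of_dvd_mul_left hdvd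
    have := Nat.le_of_dvd (by omega) this
    omega
  -- the polynomials P_j
  let Pl : ℕ → Polynomial L := fun j =>
    ∏ i ∈ Finset.range (k - 1), (Polynomial.X - Polynomial.C (c (j + (m - 1 - i))))
  have hPmonic : ∀ j, (Pl j).Monic := fun j =>
    Polynomial.monic_prod_of_monic _ _ (fun i _ => Polynomial.monic_X_sub_C _)
  have hPdeg : ∀ j, (Pl j).natDegree = k - 1 := by
    intro j
    rw [Polynomial.natDegree_prod_of_monic _ _ (fun i _ => Polynomial.monic_X_sub_C _)]
    simp [Polynomial.natDegree_X_sub_C]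
  have hPmap : ∀ j, Polynomial.map (σ 1) (Pl j) = Pl (j + 1) := by
    intro j
    rw [Polynomial.map_prod]
    apply Finset.prod_congr rfl
    intro i _
    rw [Polynomial.map_sub, Polynomial.map_X, Polynomial.map_C, ← hcsucc]
    have hidx : j + (m - 1 - i) + 1 = j + 1 + (m - 1 - i) := by omega
    rw [hidx]
  -- g0 and its conjugates
  let g0 : ℕ → L := fun l => (Pl 0).coeff l
  have hσg : ∀ (j l : ℕ), σ j (g0 l) = (Pl j).coeff l := by
    intro j
    induction j with
    | zero => intro l; exact hσ0 _
    | succ j ih =>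
        intro l
        rw [hσsucc, ih l, ← hPmap j, Polynomial.coeff_map]
  -- evaluation facts
  have heval_lt : ∀ j' j : ℕ, j' < j → j ≤ k - 1 → (Pl j).eval (c j') = 0 := by
    intro j' j hlt hle
    have hkk : 2 ≤ k := by omega
    have hi0 : j - j' - 1 ∈ Finset.range (k - 1) := by
      rw [Finset.mem_range]; omega
    show Polynomial.eval (c j') (Pl j) = 0
    rw [Polynomial.eval_prod]
    apply Finset.prod_eq_zero hi0
    have hidx : j + (m - 1 - (j - j' - 1)) = j' + m := by omega
    rw [hidx, hcper j']
    simp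
  have hdiag : ∀ j : ℕ, (Pl j).eval (c j) ≠ 0 := by
    intro j
    rw [Polynomial.eval_prod]
    rw [Finset.prod_ne_zero_iff]
    intro i hi
    rw [Finset.mem_range] at hi
    simp only [Polynomial.eval_sub, Polynomial.eval_X, Polynomial.eval_C, sub_ne_zero]
    intro heq
    exact hcne (m - 1 - i) (by omega) (by omega) j heq.symm
  -- the matrices
  let A : Matrix (Fin k) (Fin k) L := Matrix.of fun i l => σ (i : ℕ) (g0 (l : ℕ))
  let Vd : Matrix (Fin k) (Fin k) L := Matrix.of fun l j' => (c (j' : ℕ)) ^ (l : ℕ)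
  have hAV : ∀ i j' : Fin k, (A * Vd) i j' = (Pl (i : ℕ)).eval (c (j' : ℕ)) := by
    intro i j'
    rw [Matrix.mul_apply]
    rw [Polynomial.eval_eq_sum_range' (n := k) (by rw [hPdeg]; omega)]
    rw [Finset.sum_range fun l => (Pl (i : ℕ)).coeff l * (c (j' : ℕ)) ^ l]
    apply Finset.sum_congr rfl
    intro l _
    simp only [A, Vd, Matrix.of_apply]
    rw [hσg]
  have hdetA : A.det ≠ 0 := by
    have htri : (A * Vd).BlockTriangular id := by
      intro i j' hij
      rw [hAV]
      exact heval_lt _ _ hij (by omega)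
    have hdet_tri : (A * Vd).det ≠ 0 := by
      rw [Matrix.det_of_upperTriangular htri]
      rw [Finset.prod_ne_zero_iff]
      intro i _
      rw [hAV]
      exact hdiag _
    intro h0
    rw [Matrix.det_mul, h0, zero_mul] at hdet_tri
    exact hdet_tri rfl
  have hAunit : IsUnit A.det := isUnit_iff_ne_zero.mpr hdetA
  -- the vector g
  let gk : ℕ → L := fun j => ∑ l ∈ Finset.range k, g0 l * a (l + j)
  let g : Fin (k + r) → L := fun j =>
    if h : (j : ℕ) < k then g0 (j : ℕ) else gk ((j : ℕ) - k)
  -- the key identity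
  have hstar : ∀ i : ℕ, i < k → ∀ j : ℕ, j < r →
      σ i (gk j) = ∑ l ∈ Finset.range k, σ i (g0 l) * a (l + j) := by
    intro i
    induction i with
    | zero =>
        intro _ j _
        rw [hσ0]
        apply Finset.sum_congr rfl
        intro l _
        rw [hσ0]
    | succ i ih =>
        intro hik j hjr
        have hik' : i < k := by omega
        rw [hσsucc, ih hik' j hjr, map_sum]
        have hterm : ∀ l ∈ Finset.range k,
            σ 1 (σ i (g0 l) * a (l + j)) =
              σ (i+1) (g0 l) * a (l + j) + (σ (i+1) (g0 l) * ρ ^ l) * (ρ ^ j * θ) := by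
          intro l hl
          rw [Finset.mem_range] at hl
          rw [map_mul, ← hσsucc, ha (l + j) (by omega)]
          rw [pow_add]
          ring
        rw [Finset.sum_congr rfl hterm, Finset.sum_add_distrib]
        have hzero : ∑ l ∈ Finset.range k, (σ (i+1) (g0 l) * ρ ^ l) * (ρ ^ j * θ) = 0 := by
          rw [← Finset.sum_mul]
          have : ∑ l ∈ Finset.range k, σ (i+1) (g0 l) * ρ ^ l = 0 := by
            have := heval_lt 0 (i+1) (by omega) (by omega)
            rw [Polynomial.eval_eq_sum_range' (n := k) (by rw [hPdeg]; omega)] at this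
            rw [hc0] at this
            rw [← this]
            apply Finset.sum_congr rfl
            intro l _
            rw [hσg]
          rw [this, zero_mul]
        rw [hzero, add_zero]
  -- linear independence of g
  have hgli : LinearIndependent K g := by
    rw [Fintype.linearIndependent_iff]
    intro lam hlam
    set lamL : Fin k → K := fun l => lam (finSumFinEquiv (Sum.inl l)) with hlamL
    set lamR : Fin r → K := fun j => lam (finSumFinEquiv (Sum.inr j)) with hlamR
    have hgl : ∀ l : Fin k, g (finSumFinEquiv (Sum.inl l)) = g0 (l : ℕ) := by
      intro l
      show g (Fin.castAdd r l) = g0 (l : ℕ)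
      simp only [g, Fin.coe_castAdd]
      rw [dif_pos l.isLt]
    have hgr : ∀ j : Fin r, g (finSumFinEquiv (Sum.inr j)) = gk (j : ℕ) := by
      intro j
      show g (Fin.natAdd k j) = gk (j : ℕ)
      simp only [g, Fin.coe_natAdd]
      rw [dif_neg (by omega)]
      congr 1
      omega
    have hsplit : ∑ l : Fin k, (algebraMap K L (lamL l)) * g0 (l : ℕ)
        + ∑ j : Fin r, (algebraMap K L (lamR j)) * gk (j : ℕ) = 0 := by
      have h1 := Equiv.sum_comp finSumFinEquiv (fun i => lam i • g i)
      rw [Fintype.sum_sum_type] at h1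
      rw [hlam] at h1
      rw [← h1]
      congr 1
      · apply Finset.sum_congr rfl; intro l _
        rw [hgl l, Algebra.smul_def]
      · apply Finset.sum_congr rfl; intro j _
        rw [hgr j, Algebra.smul_def]
    -- the vector μ
    set μ : Fin k → L := fun l =>
      algebraMap K L (lamL l) + ∑ j : Fin r, algebraMap K L (lamR j) * a ((l : ℕ) + (j : ℕ))
      with hμ
    have hμA : A.mulVec μ = 0 := by
      funext i
      show ∑ l : Fin k, A i l * μ l = 0
      have happ := congrArg (σ (i : ℕ)) hsplit
      rw [map_zero, map_add, map_sum, map_sum] at happ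
      have h2 : ∀ l : Fin k, σ (i:ℕ) (algebraMap K L (lamL l) * g0 (l:ℕ))
          = algebraMap K L (lamL l) * σ (i:ℕ) (g0 (l:ℕ)) := by
        intro l; rw [map_mul, hσalg]
      have h3 : ∀ j : Fin r, σ (i:ℕ) (algebraMap K L (lamR j) * gk (j:ℕ))
          = algebraMap K L (lamR j) *
            ∑ l : Fin k, σ (i:ℕ) (g0 (l:ℕ)) * a ((l:ℕ) + (j:ℕ)) := by
        intro j
        rw [map_mul, hσalg, hstar (i:ℕ) i.isLt (j:ℕ) j.isLt]
        congr 1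
        rw [Finset.sum_range fun l => σ (i:ℕ) (g0 l) * a (l + (j:ℕ))]
      rw [Finset.sum_congr rfl (fun l _ => h2 l), Finset.sum_congr rfl (fun j _ => h3 j)] at happ
      calc ∑ l : Fin k, A i l * μ l
          = ∑ l : Fin k, (algebraMap K L (lamL l) * σ (i:ℕ) (g0 (l:ℕ))
              + ∑ j : Fin r, algebraMap K L (lamR j)
                  * (σ (i:ℕ) (g0 (l:ℕ)) * a ((l:ℕ) + (j:ℕ)))) := by
            apply Finset.sum_congr rfl
            intro l _
            simp only [A, Matrix.of_apply, μ]
            rw [mul_add, Finset.mul_sum]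
            congr 1
            · ring
            · apply Finset.sum_congr rfl; intro j _; ring
        _ = (∑ l : Fin k, algebraMap K L (lamL l) * σ (i:ℕ) (g0 (l:ℕ)))
            + ∑ l : Fin k, ∑ j : Fin r, algebraMap K L (lamR j)
                * (σ (i:ℕ) (g0 (l:ℕ)) * a ((l:ℕ) + (j:ℕ))) := Finset.sum_add_distrib
        _ = (∑ l : Fin k, algebraMap K L (lamL l) * σ (i:ℕ) (g0 (l:ℕ)))
            + ∑ j : Fin r, ∑ l : Fin k, algebraMap K L (lamR j)
                * (σ (i:ℕ) (g0 (l:ℕ)) * a ((l:ℕ) + (j:ℕ))) := by rw [Finset.sum_comm]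
        _ = (∑ l : Fin k, algebraMap K L (lamL l) * σ (i:ℕ) (g0 (l:ℕ)))
            + ∑ j : Fin r, algebraMap K L (lamR j)
                * ∑ l : Fin k, σ (i:ℕ) (g0 (l:ℕ)) * a ((l:ℕ) + (j:ℕ)) := by
            congr 1
            apply Finset.sum_congr rfl
            intro j _
            rw [Finset.mul_sum]
        _ = 0 := happ
    have hμzero : μ = 0 := by
      have h1 : A⁻¹.mulVec (A.mulVec μ) = μ := by
        rw [Matrix.mulVec_mulVec, Matrix.nonsing_inv_mul A hAunit, Matrix.one_mulVec]
      rw [hμA, Matrix.mulVec_zero] at h1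
      exact h1.symm
    -- deduce lamR = 0
    have hρlir : LinearIndependent K (fun j : Fin r => ρ ^ (j : ℕ)) := by
      have hcomp := hρli.comp (Fin.castLE (by omega : r ≤ m)) (Fin.castLE_injective _)
      have : ((fun i : Fin m => ρ ^ (i : ℕ)) ∘ (Fin.castLE (by omega : r ≤ m)))
          = fun j : Fin r => ρ ^ (j : ℕ) := by
        funext j; simp
      rwa [this] at hcomp
    have hlamR : ∀ j : Fin r, lamR j = 0 := by
      have hcancel : (∑ j : Fin r, algebraMap K L (lamR j) * ρ ^ (j : ℕ)) = 0 := by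
        obtain ⟨l⟩ : Nonempty (Fin k) := ⟨⟨0, hk⟩⟩
        have hμl : μ l = 0 := congrFun hμzero l
        have hD : σ 1 (μ l) - μ l = 0 := by rw [hμl]; simp
        have e1 : σ 1 (μ l) = algebraMap K L (lamL l)
            + ∑ j : Fin r, algebraMap K L (lamR j)
                * (a ((l:ℕ) + (j:ℕ)) + ρ ^ ((l:ℕ) + (j:ℕ)) * θ) := by
          simp only [μ]
          rw [map_add, map_sum, hσalg]
          congr 1
          apply Finset.sum_congr rfl
          intro j _
          rw [map_mul, hσalg, ha ((l:ℕ) + (j:ℕ)) (by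
            have h1 := l.isLt; have h2 := j.isLt; omega)]
        have e2 : σ 1 (μ l) - μ l
            = (∑ j : Fin r, algebraMap K L (lamR j) * ρ ^ (j:ℕ)) * (ρ ^ (l:ℕ) * θ) := by
          rw [e1]
          simp only [μ]
          rw [Finset.sum_mul]
          have e3 : ∀ j : Fin r, algebraMap K L (lamR j)
              * (a ((l:ℕ) + (j:ℕ)) + ρ ^ ((l:ℕ) + (j:ℕ)) * θ)
              = algebraMap K L (lamR j) * a ((l:ℕ) + (j:ℕ))
                + algebraMap K L (lamR j) * ρ ^ (j:ℕ) * (ρ ^ (l:ℕ) * θ) := by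
            intro j
            rw [pow_add]
            ring
          rw [Finset.sum_congr rfl (fun j _ => e3 j), Finset.sum_add_distrib]
          ring
        rw [hD] at e2
        rcases mul_eq_zero.mp e2.symm with h | h
        · exact h
        · exact absurd h (mul_ne_zero (pow_ne_zero _ hρ0) hθ0)
      have hsum0 : ∑ j : Fin r, lamR j • ρ ^ (j : ℕ) = 0 := by
        rw [← hcancel]
        exact Finset.sum_congr rfl (fun j _ => Algebra.smul_def _ _)
      exact Fintype.linearIndependent_iff.mp hρlir lamR hsum0
    -- deduce lamL = 0
    have hlamL : ∀ l : Fin k, lamL l = 0 := by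
      intro l
      have hμl : μ l = 0 := congrFun hμzero l
      simp only [μ] at hμl
      rw [Finset.sum_congr rfl (fun j _ => by rw [hlamR j, map_zero, zero_mul])] at hμl
      rw [Finset.sum_const_zero, add_zero] at hμl
      exact (algebraMap K L).injective (by rw [hμl, map_zero])
    intro i
    rcases h : finSumFinEquiv.symm i with l | j
    · have : i = finSumFinEquiv (Sum.inl l) := by rw [← h, Equiv.apply_symm_apply]
      rw [this]; exact hlamL l
    · have : i = finSumFinEquiv (Sum.inr j) := by rw [← h, Equiv.apply_symm_apply]
      rw [this]; exact hlamR j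
  -- rank of g
  have hrk : rkq K g = k + r := by
    unfold rkq
    rw [finrank_span_eq_card hgli, Fintype.card_fin]
  -- the matrix X
  refine ⟨Matrix.of fun (i : Fin k) (j : Fin r) => a ((i : ℕ) + (j : ℕ)), ?_, ?_⟩
  · intro i i' j j' hij
    simp only [Matrix.of_apply]
    rw [hij]
  · refine ⟨g, hrk, ?_⟩
    set X : Matrix (Fin k) (Fin r) L :=
      Matrix.of fun (i : Fin k) (j : Fin r) => a ((i : ℕ) + (j : ℕ)) with hX
    -- matrices GM and MM
    set GM : Matrix (Fin k) (Fin (k + r)) L := Matrix.of fun i j =>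
      (Matrix.fromCols (1 : Matrix (Fin k) (Fin k) L) X) i (finSumFinEquiv.symm j) with hGM
    set MM : Matrix (Fin k) (Fin (k + r)) L := Matrix.of fun i j =>
      σ (i : ℕ) (g j) with hMM
    have hMMeq : MM = A * GM := by
      ext i j
      rw [Matrix.mul_apply]
      simp only [MM, Matrix.of_apply]
      rcases hj : finSumFinEquiv.symm j with j' | j''
      · -- identity column
        have hjval : (j : ℕ) = (j' : ℕ) := by
          have : j = finSumFinEquiv (Sum.inl j') := by rw [← hj, Equiv.apply_symm_apply]
          rw [this, finSumFinEquiv_apply_left, Fin.coe_castAdd]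
        have hgj : g j = g0 (j' : ℕ) := by
          simp only [g, hjval]
          rw [dif_pos j'.isLt]
        rw [hgj]
        have hsum : ∀ l : Fin k, A i l * GM l j = A i l * (if l = j' then 1 else 0) := by
          intro l
          simp only [GM, Matrix.of_apply, hj, Matrix.fromCols_apply_inl, Matrix.one_apply]
        rw [Finset.sum_congr rfl (fun l _ => hsum l)]
        simp only [mul_ite, mul_one, mul_zero]
        rw [Finset.sum_ite_eq' Finset.univ j' (fun l => A i l)]
        simp [A]
      · -- X column
        have hjval : (j : ℕ) = k + (j'' : ℕ) := by
          have : j = finSumFinEquiv (Sum.inr j'') := by rw [← hj, Equiv.apply_symm_apply]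
          rw [this, finSumFinEquiv_apply_right, Fin.coe_natAdd]
        have hgj : g j = gk (j'' : ℕ) := by
          simp only [g, hjval]
          rw [dif_neg (by omega)]
          congr 1
          omega
        rw [hgj, hstar (i : ℕ) i.isLt (j'' : ℕ) j''.isLt]
        rw [Finset.sum_range fun l => σ (i:ℕ) (g0 l) * a (l + (j'':ℕ))]
        apply Finset.sum_congr rfl
        intro l _
        simp only [A, GM, Matrix.of_apply, hj, Matrix.fromCols_apply_inr, X]
    have hGMeq : GM = A⁻¹ * MM := by
      rw [hMMeq, ← Matrix.mul_assoc, Matrix.nonsing_inv_mul A hAunit, Matrix.one_mul]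
    -- generic row space fact
    have key : ∀ (B : Matrix (Fin k) (Fin k) L) (CM : Matrix (Fin k) (Fin (k + r)) L)
        (i : Fin k), (B * CM) i ∈ Submodule.span L (Set.range fun l : Fin k => CM l) := by
      intro B CM i
      have hrow : (B * CM) i = ∑ l : Fin k, B i l • CM l := by
        funext j
        rw [Matrix.mul_apply]
        rw [Finset.sum_apply]
        apply Finset.sum_congr rfl
        intro l _
        simp [smul_eq_mul]
      rw [hrow]
      exact Submodule.sum_mem _ fun l _ =>
        Submodule.smul_mem _ _ (Submodule.subset_span ⟨l, rfl⟩)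
    -- identify the two spans
    have hCX : CX X = Submodule.span L (Set.range fun i : Fin k => GM i) := by
      have hfun : (fun i : Fin k => Matrix.reindex (Equiv.refl (Fin k)) finSumFinEquiv
          (Matrix.fromCols (1 : Matrix (Fin k) (Fin k) L) X) i)
          = fun i : Fin k => GM i := by
        funext i j
        simp [GM, Matrix.reindex_apply, Matrix.submatrix_apply]
      unfold CX
      rw [hfun]
    have hGab : (Submodule.span L (Set.range fun i : Fin k => fun j => g j ^ q ^ (s * (i:ℕ))))
        = Submodule.span L (Set.range fun i : Fin k => MM i) := by
      have hfun : (fun i : Fin k => fun j => g j ^ q ^ (s * (i:ℕ)))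
          = fun i : Fin k => MM i := by
        funext i j
        simp only [MM, Matrix.of_apply]
        rw [hσ]
      rw [hfun]
    rw [hCX, hGab]
    apply le_antisymm
    · rw [Submodule.span_le]
      rintro x ⟨i, rfl⟩
      rw [hGMeq]
      exact key A⁻¹ MM i
    · rw [Submodule.span_le]
      rintro x ⟨i, rfl⟩
      rw [hMMeq]
      exact key A GM i
end

section
/- Suppose n is even and k = n/2. Let X ∈ 𝔽_{q^m}^{k×k} be a circulant matrix. Then the minimum rank distance of the code C_X is at most 2. In particular, if n ≥ 4, then C_X is not MRD. -/
open Finset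

/-- for `n = 2k` (even) and `X ∈ 𝔽_{q^m}^{k×k}` circulant, the minimum rank
distance of `C_X` is at most 2; in particular if `n ≥ 4` (i.e. `k ≥ 2`) then `C_X` is not
MRD (its minimum rank distance is not `n - k + 1 = k + 1`). -/
theorem stmt19 {K L : Type*} [Field K] [Field L] [Algebra K L] [Fintype K] [Fintype L]
    (q m k : ℕ) (hq : Fintype.card K = q) (hm : Module.finrank K L = m)
    (hk : 0 < k) (hnm : k + k ≤ m)
    (X : Matrix (Fin k) (Fin k) L)
    (hcirc : ∀ (i j i' j' : Fin k),
      ((j : ℕ) + k - (i : ℕ)) % k = ((j' : ℕ) + k - (i' : ℕ)) % k → X i j = X i' j') :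
    minRankDist K (CX X) ≤ 2 ∧ (2 ≤ k → minRankDist K (CX X) ≠ k + 1) := by
  
  haveI : NeZero k := ⟨hk.ne'⟩
  -- column sums are all equal
  have hcol : ∀ j j' : Fin k, ∑ i, X i j = ∑ i, X i j' := by
    intro j j'
    set c : ℕ := (j' : ℕ) + (k - (j : ℕ)) with hc
    set f : Fin k → Fin k := fun i => ⟨((i : ℕ) + c) % k, Nat.mod_lt _ hk⟩ with hf
    have hinj : Function.Injective f := by
      intro a b hab
      have h1 : ((a : ℕ) + c) % k = ((b : ℕ) + c) % k := congrArg Fin.val hab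
      have h2 : (a : ℕ) ≡ (b : ℕ) [MOD k] := Nat.ModEq.add_right_cancel' c h1
      exact Fin.ext (by
        have := h2
        unfold Nat.ModEq at this
        rwa [Nat.mod_eq_of_lt a.isLt, Nat.mod_eq_of_lt b.isLt] at this)
    have hbij : Function.Bijective f := Finite.injective_iff_bijective.mp hinj
    refine Fintype.sum_bijective f hbij _ _ (fun i => ?_)
    apply hcirc i j (f i) j'
    have hfi : ((f i : Fin k) : ℕ) = ((i : ℕ) + c) % k := rfl
    rw [hfi]
    have hjk : (j : ℕ) ≤ k := j.isLt.le
    have hik : (i : ℕ) ≤ k := i.isLt.le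
    have hek : ((i : ℕ) + c) % k ≤ k := (Nat.mod_lt _ hk).le
    have h1 : (i : ℕ) ≤ (j : ℕ) + k := by omega
    have h2 : ((i : ℕ) + c) % k ≤ (j' : ℕ) + k := by
      have := Nat.mod_lt ((i : ℕ) + c) hk; omega
    rw [← Nat.ModEq, ← ZMod.natCast_eq_natCast_iff, Nat.cast_sub h1, Nat.cast_sub h2,
      ZMod.natCast_mod, hc]
    push_cast [Nat.cast_sub hjk]
    rw [ZMod.natCast_self]
    ring
  -- the codeword: sum of all rows of (I | X)
  set M : Matrix (Fin k) (Fin (k + k)) L :=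
    Matrix.reindex (Equiv.refl (Fin k)) finSumFinEquiv
      (Matrix.fromCols (1 : Matrix (Fin k) (Fin k) L) X) with hM
  set c : Fin (k + k) → L := ∑ i : Fin k, M i with hcdef
  have hmem : c ∈ CX X := by
    refine Submodule.sum_mem _ (fun i _ => Submodule.subset_span ⟨i, rfl⟩)
  set z : Fin k := ⟨0, hk⟩ with hz
  set σ : L := ∑ i, X i z with hσ
  have happ : ∀ j : Fin (k + k), c j =
      ∑ i : Fin k, Matrix.fromCols (1 : Matrix (Fin k) (Fin k) L) X i
        (finSumFinEquiv.symm j) := by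
    intro j
    simp [hcdef, hM, Matrix.reindex_apply, Finset.sum_apply]
    exact Finset.sum_apply j _ _
  have hrange : ∀ j : Fin (k + k), c j = 1 ∨ c j = σ := by
    intro j
    rw [happ j]
    rcases h : finSumFinEquiv.symm j with a | a
    · left
      simp [Matrix.fromCols, Matrix.one_apply]
    · right
      simp only [Matrix.fromCols, Matrix.of_apply]
      exact hcol a z
  have hone : c (finSumFinEquiv (Sum.inl z)) = 1 := by
    rw [happ, Equiv.symm_apply_apply]
    simp [Matrix.fromCols, Matrix.one_apply]
  have hne : c ≠ 0 := by
    intro h0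
    have := congrFun h0 (finSumFinEquiv (Sum.inl z))
    rw [hone] at this
    exact one_ne_zero this
  have hrk : rkq K c ≤ 2 := by
    classical
    have hsub : Set.range c ⊆ ({1, σ} : Set L) := by
      rintro x ⟨j, rfl⟩
      rcases hrange j with h | h <;> simp [h]
    have hle : Submodule.span K (Set.range c) ≤ Submodule.span K ({1, σ} : Set L) :=
      Submodule.span_mono hsub
    have h2 : Module.finrank K (Submodule.span K ({1, σ} : Set L)) ≤ 2 := by
      refine (finrank_span_le_card ({1, σ} : Set L)).trans ?_
      have : ({1, σ} : Set L).toFinset ⊆ {1, σ} := by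
        intro x hx
        simpa using (Set.mem_toFinset.mp hx)
      refine (Finset.card_le_card this).trans ?_
      exact (Finset.card_insert_le _ _).trans (by simp)
    exact le_trans (Submodule.finrank_mono hle) h2
  have hmin : minRankDist K (CX X) ≤ 2 := by
    have hmem' : rkq K c ∈ {d : ℕ | ∃ c' ∈ CX X, c' ≠ 0 ∧ rkq K c' = d} :=
      ⟨c, hmem, hne, rfl⟩
    exact le_trans (Nat.sInf_le hmem') hrk
  exact ⟨hmin, fun h2 heq => by omega⟩
end
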